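/- Separated-hulls coloring (Observation on separated configurations): let P_U, P_L ⊆ ℝ² be finite with all x-coordinates distinct, p the rightmost point of P_U, q the leftmost point of P_L, p.x < q.x. Suppose the line l through p and its predecessor l_U on the upper hull of P_U passes strictly above q and does not meet the segment from q to q's successor r_L on the lower hull of P_L, and the line l' through q and r_L passes strictly below p and does not meet the segment l_U p. Then the coloring assigning blue to p and to all points of P_L to the right of q, and red to q and all points of P_U to the left of p, is good: every non-vertical line intersecting at least three of the associated vertical rays (downward at points of P_U, upward at points of P_L) intersects rays of both colors. -/

import Mathlib

/-- `q` is a vertex of the upper convex hull of `P`. -/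
def UpHullVertex (P : Set (ℝ × ℝ)) (q : ℝ × ℝ) : Prop :=
  q ∈ P ∧ ∃ m k : ℝ, q.2 = m * q.1 + k ∧ ∀ u ∈ P, u.2 ≤ m * u.1 + k

/-- `q` is a vertex of the lower convex hull of `P`. -/
def LowHullVertex (P : Set (ℝ × ℝ)) (q : ℝ × ℝ) : Prop :=
  q ∈ P ∧ ∃ m k : ℝ, q.2 = m * q.1 + k ∧ ∀ u ∈ P, m * u.1 + k ≤ u.2

lemma seg_root (a b : ℝ × ℝ) (m k : ℝ) (ha : a.2 < m * a.1 + k) (hb : m * b.1 + k < b.2) :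
    ∃ x ∈ segment ℝ a b, x.2 = m * x.1 + k := by
  have hfa : 0 < m * a.1 + k - a.2 := by linarith
  have hden : 0 < (m * a.1 + k - a.2) - (m * b.1 + k - b.2) := by linarith
  set t : ℝ := (m * a.1 + k - a.2) / ((m * a.1 + k - a.2) - (m * b.1 + k - b.2)) with htdef
  have ht0 : 0 ≤ t := le_of_lt (div_pos hfa hden)
  have ht1 : t ≤ 1 := (div_le_one hden).mpr (by linarith)
  have ht : t * ((m * a.1 + k - a.2) - (m * b.1 + k - b.2)) = m * a.1 + k - a.2 := by
    rw [htdef]; exact div_mul_cancel₀ _ (ne_of_gt hden)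
  refine ⟨(1 - t) • a + t • b, ⟨1 - t, t, by linarith, ht0, by ring, rfl⟩, ?_⟩
  show (1 - t) * a.2 + t * b.2 = m * ((1 - t) * a.1 + t * b.1) + k
  linear_combination ht

set_option maxHeartbeats 1600000 in
/-- Separated-hulls coloring: with `p` the rightmost point of `P_U`, `q` the
leftmost point of `P_L`, `p.1 < q.1`, `l_U` the upper-hull predecessor of `p`,
`r_L` the lower-hull successor of `q`, assume the line through `l_U, p` passes
strictly above `q` and misses the segment `q r_L`, and the line through
`q, r_L` passes strictly below `p` and misses the segment `l_U p`. Then the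
coloring which is blue on `p` and points of `P_L` right of `q`, and red on `q`
and points of `P_U` left of `p`, is good: every non-vertical line meeting at
least three of the associated vertical rays (downward at `P_U`, upward at
`P_L`) meets rays of both colors. -/
theorem separated_hulls_coloring
    (PU PL : Set (ℝ × ℝ)) (hU : PU.Finite) (hL : PL.Finite)
    (hx : ∀ u ∈ PU ∪ PL, ∀ v ∈ PU ∪ PL, u ≠ v → u.1 ≠ v.1)
    (p q lU rL : ℝ × ℝ)
    (hpU : p ∈ PU) (hqL : q ∈ PL)
    (hpmax : ∀ u ∈ PU, u.1 ≤ p.1) (hqmin : ∀ v ∈ PL, q.1 ≤ v.1)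
    (hpq : p.1 < q.1)
    (hlU : UpHullVertex PU lU) (hlUp : lU.1 < p.1)
    (hlUpred : ∀ u : ℝ × ℝ, UpHullVertex PU u → lU.1 < u.1 → u.1 < p.1 → False)
    (hrL : LowHullVertex PL rL) (hqrL : q.1 < rL.1)
    (hrLsucc : ∀ v : ℝ × ℝ, LowHullVertex PL v → q.1 < v.1 → v.1 < rL.1 → False)
    (hlAbove : q.2 < (p.2 - lU.2) / (p.1 - lU.1) * (q.1 - p.1) + p.2)
    (hlMiss : ∀ x ∈ segment ℝ q rL, x.2 ≠ (p.2 - lU.2) / (p.1 - lU.1) * (x.1 - p.1) + p.2)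
    (hl'Below : (rL.2 - q.2) / (rL.1 - q.1) * (p.1 - q.1) + q.2 < p.2)
    (hl'Miss : ∀ x ∈ segment ℝ lU p, x.2 ≠ (rL.2 - q.2) / (rL.1 - q.1) * (x.1 - q.1) + q.2)
    (χ : ℝ × ℝ → Bool)
    (hχp : χ p = true) (hχq : χ q = false)
    (hχL : ∀ v ∈ PL, q.1 < v.1 → χ v = true)
    (hχU : ∀ u ∈ PU, u.1 < p.1 → χ u = false) :
    ∀ m k : ℝ,
      3 ≤ ({u ∈ PU | m * u.1 + k ≤ u.2} ∪ {v ∈ PL | v.2 ≤ m * v.1 + k}).ncard →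
      (∃ x, ((x ∈ PU ∧ m * x.1 + k ≤ x.2) ∨ (x ∈ PL ∧ x.2 ≤ m * x.1 + k)) ∧ χ x = true) ∧
      (∃ x, ((x ∈ PU ∧ m * x.1 + k ≤ x.2) ∨ (x ∈ PL ∧ x.2 ≤ m * x.1 + k)) ∧ χ x = false) := by
  intro m k h3
  obtain ⟨ml, hmldef⟩ : ∃ r : ℝ, r = (p.2 - lU.2) / (p.1 - lU.1) := ⟨_, rfl⟩
  obtain ⟨ml', hml'def⟩ : ∃ r : ℝ, r = (rL.2 - q.2) / (rL.1 - q.1) := ⟨_, rfl⟩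
  rw [← hmldef] at hlAbove hlMiss
  rw [← hml'def] at hl'Below hl'Miss
  have hqx : ∀ v ∈ PL, v ≠ q → q.1 < v.1 := fun v hv hne =>
    lt_of_le_of_ne (hqmin v hv) (Ne.symm (hx v (Or.inr hv) q (Or.inr hqL) hne))
  have hpx : ∀ u ∈ PU, u ≠ p → u.1 < p.1 := fun u hu hne =>
    lt_of_le_of_ne (hpmax u hu) (hx u (Or.inl hu) p (Or.inl hpU) hne)
  have hlUq : lU.1 < q.1 := lt_trans hlUp hpq
  -- lower support: all of PL lies weakly above the line through q and rL
  have hA : ∀ v ∈ PL, ml' * (v.1 - q.1) + q.2 ≤ v.2 := by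
    have hd : 0 < rL.1 - q.1 := sub_pos.mpr hqrL
    have hrLne : rL ≠ q := fun h => by rw [h] at hqrL; exact lt_irrefl _ hqrL
    obtain ⟨v0, hv0, hmin⟩ := Set.exists_min_image (PL \ {q})
      (fun v => (v.2 - q.2) / (v.1 - q.1)) hL.diff ⟨rL, hrL.1, by simpa using hrLne⟩
    have hv0PL : v0 ∈ PL := hv0.1
    have hv0q : v0 ≠ q := by simpa using hv0.2
    have hv0x : q.1 < v0.1 := hqx v0 hv0PL hv0q
    have hv0d : 0 < v0.1 - q.1 := sub_pos.mpr hv0x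
    have hline : ∀ v ∈ PL, (v0.2 - q.2) / (v0.1 - q.1) * (v.1 - q.1) + q.2 ≤ v.2 := by
      intro v hv
      by_cases hvq : v = q
      · subst hvq; simp
      · have hvx : 0 < v.1 - q.1 := sub_pos.mpr (hqx v hv hvq)
        have := hmin v ⟨hv, by simpa using hvq⟩
        have h2 := (le_div_iff₀ hvx).mp this
        linarith
    have hkey : ml' ≤ (v0.2 - q.2) / (v0.1 - q.1) := by
      rcases lt_trichotomy v0.1 rL.1 with hlt | heq | hgt
      · exfalso
        refine hrLsucc v0 ⟨hv0PL, (v0.2 - q.2) / (v0.1 - q.1),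
          q.2 - (v0.2 - q.2) / (v0.1 - q.1) * q.1, ?_, ?_⟩ hv0x hlt
        · have hc : (v0.2 - q.2) / (v0.1 - q.1) * (v0.1 - q.1) = v0.2 - q.2 :=
            div_mul_cancel₀ _ (ne_of_gt hv0d)
          linear_combination -hc
        · intro u hu
          have := hline u hu
          nlinarith [this]
      · have hv0rL : v0 = rL := by
          by_contra hne
          exact (hx v0 (Or.inr hv0PL) rL (Or.inr hrL.1) hne) heq
        rw [hv0rL, hml'def]
      · obtain ⟨hrLPL, mr, kr, hrEq, hrSupp⟩ := hrL
        have h1 := hrSupp q hqL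
        have h2 := hrSupp v0 hv0PL
        rw [hml'def, div_le_div_iff₀ hd hv0d]
        nlinarith [mul_nonneg (by linarith : (0:ℝ) ≤ q.2 - (mr * q.1 + kr))
            (by linarith : (0:ℝ) ≤ v0.1 - rL.1),
          mul_nonneg (by linarith : (0:ℝ) ≤ v0.2 - (mr * v0.1 + kr))
            (by linarith : (0:ℝ) ≤ rL.1 - q.1)]
    intro v hv
    have h1 := hline v hv
    have h2 := mul_le_mul_of_nonneg_right hkey (sub_nonneg.mpr (hqmin v hv))
    linarith
  -- upper support: all of PU lies weakly below the line through lU and p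
  have hB : ∀ u ∈ PU, u.2 ≤ ml * (u.1 - p.1) + p.2 := by
    have hd : 0 < p.1 - lU.1 := sub_pos.mpr hlUp
    have hlUne : lU ≠ p := fun h => by rw [h] at hlUp; exact lt_irrefl _ hlUp
    obtain ⟨u0, hu0, hmin⟩ := Set.exists_min_image (PU \ {p})
      (fun u => (p.2 - u.2) / (p.1 - u.1)) hU.diff ⟨lU, hlU.1, by simpa using hlUne⟩
    have hu0PU : u0 ∈ PU := hu0.1
    have hu0p : u0 ≠ p := by simpa using hu0.2
    have hu0x : u0.1 < p.1 := hpx u0 hu0PU hu0p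
    have hu0d : 0 < p.1 - u0.1 := sub_pos.mpr hu0x
    have hline : ∀ u ∈ PU, u.2 ≤ (p.2 - u0.2) / (p.1 - u0.1) * (u.1 - p.1) + p.2 := by
      intro u hu
      by_cases hup : u = p
      · subst hup; simp
      · have hux : 0 < p.1 - u.1 := sub_pos.mpr (hpx u hu hup)
        have := hmin u ⟨hu, by simpa using hup⟩
        have h2 := (le_div_iff₀ hux).mp this
        nlinarith [h2]
    have hkey : ml ≤ (p.2 - u0.2) / (p.1 - u0.1) := by
      rcases lt_trichotomy lU.1 u0.1 with hlt | heq | hgt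
      · exfalso
        refine hlUpred u0 ⟨hu0PU, (p.2 - u0.2) / (p.1 - u0.1),
          p.2 - (p.2 - u0.2) / (p.1 - u0.1) * p.1, ?_, ?_⟩ hlt hu0x
        · have hc : (p.2 - u0.2) / (p.1 - u0.1) * (p.1 - u0.1) = p.2 - u0.2 :=
            div_mul_cancel₀ _ (ne_of_gt hu0d)
          linear_combination hc
        · intro u hu
          have := hline u hu
          nlinarith [this]
      · have hu0lU : u0 = lU := by
          by_contra hne
          exact (hx u0 (Or.inl hu0PU) lU (Or.inl hlU.1) hne) heq.symm
        rw [hu0lU, hmldef]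
      · obtain ⟨hlUPU, mu, ku, huEq, huSupp⟩ := hlU
        have h1 := huSupp p hpU
        have h2 := huSupp u0 hu0PU
        rw [hmldef, div_le_div_iff₀ hd hu0d]
        nlinarith [mul_nonneg (by linarith : (0:ℝ) ≤ (mu * p.1 + ku) - p.2)
            (by linarith : (0:ℝ) ≤ lU.1 - u0.1),
          mul_nonneg (by linarith : (0:ℝ) ≤ (mu * u0.1 + ku) - u0.2)
            (by linarith : (0:ℝ) ≤ p.1 - lU.1)]
    intro u hu
    have h1 := hline u hu
    have h2 := mul_le_mul_of_nonpos_right hkey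
      (sub_nonpos.mpr (hpmax u hu))
    linarith
  -- the line through lU and p passes strictly above rL
  have hC : rL.2 < ml * (rL.1 - p.1) + p.2 := by
    by_contra hc
    push_neg at hc
    rcases eq_or_lt_of_le hc with heq | hlt
    · exact hlMiss rL (right_mem_segment ℝ q rL) heq.symm
    · obtain ⟨x, hxseg, hxeq⟩ := seg_root q rL ml (p.2 - ml * p.1)
        (by nlinarith [hlAbove]) (by nlinarith [hlt])
      exact hlMiss x hxseg (by rw [hxeq]; ring)
  -- the line through q and rL passes strictly below lU
  have hD : ml' * (lU.1 - q.1) + q.2 < lU.2 := by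
    by_contra hc
    push_neg at hc
    rcases eq_or_lt_of_le hc with heq | hlt
    · exact hl'Miss lU (left_mem_segment ℝ lU p) heq
    · obtain ⟨x, hxseg, hxeq⟩ := seg_root lU p ml' (q.2 - ml' * q.1)
        (by nlinarith [hlt]) (by nlinarith [hl'Below])
      exact hl'Miss x hxseg (by rw [hxeq]; ring)
  constructor
  · -- blue element exists
    by_contra hno
    push_neg at hno
    have hp2 : p.2 < m * p.1 + k := by
      by_contra hc
      push_neg at hc
      exact absurd hχp (hno p (Or.inl ⟨hpU, hc⟩))
    have hu1 : ∃ u, u ∈ PU ∧ u ≠ p ∧ m * u.1 + k ≤ u.2 := by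
      by_contra hc
      push_neg at hc
      have hsub : ({u ∈ PU | m * u.1 + k ≤ u.2} ∪ {v ∈ PL | v.2 ≤ m * v.1 + k}) ⊆ {q} := by
        rintro x (⟨hxU, hxle⟩ | ⟨hxL, hxle⟩)
        · exfalso
          by_cases hxp : x = p
          · subst hxp; linarith
          · exact absurd hxle (not_le.mpr (by linarith [hc x hxU hxp]))
        · by_contra hxq
          simp only [Set.mem_singleton_iff] at hxq
          exact absurd (hχL x hxL (hqx x hxL hxq)) (hno x (Or.inr ⟨hxL, hxle⟩))
      have hle := Set.ncard_le_ncard hsub (Set.finite_singleton q)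
      rw [Set.ncard_singleton] at hle
      omega
    obtain ⟨u1, hu1U, hu1p, hu1le⟩ := hu1
    have hu1x : u1.1 < p.1 := hpx u1 hu1U hu1p
    have hu1B := hB u1 hu1U
    have hm : ml < m := by
      by_contra hcm
      push_neg at hcm
      nlinarith [mul_nonneg (sub_nonneg.mpr hcm) (le_of_lt (sub_pos.mpr hu1x))]
    have hrLin : rL.2 ≤ m * rL.1 + k := by
      nlinarith [mul_pos (sub_pos.mpr hm) (sub_pos.mpr (lt_trans hpq hqrL))]
    exact absurd (hχL rL hrL.1 hqrL) (hno rL (Or.inr ⟨hrL.1, hrLin⟩))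
  · -- red element exists
    by_contra hno
    push_neg at hno
    have hq2 : m * q.1 + k < q.2 := by
      by_contra hc
      push_neg at hc
      exact absurd hχq (hno q (Or.inr ⟨hqL, hc⟩))
    have hv1 : ∃ v, v ∈ PL ∧ v ≠ q ∧ v.2 ≤ m * v.1 + k := by
      by_contra hc
      push_neg at hc
      have hsub : ({u ∈ PU | m * u.1 + k ≤ u.2} ∪ {v ∈ PL | v.2 ≤ m * v.1 + k}) ⊆ {p} := by
        rintro x (⟨hxU, hxle⟩ | ⟨hxL, hxle⟩)
        · by_contra hxp
          simp only [Set.mem_singleton_iff] at hxp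
          exact absurd (hχU x hxU (hpx x hxU hxp)) (hno x (Or.inl ⟨hxU, hxle⟩))
        · exfalso
          by_cases hxq : x = q
          · subst hxq; linarith
          · exact absurd hxle (not_le.mpr (by linarith [hc x hxL hxq]))
      have hle := Set.ncard_le_ncard hsub (Set.finite_singleton p)
      rw [Set.ncard_singleton] at hle
      omega
    obtain ⟨v1, hv1L, hv1q, hv1le⟩ := hv1
    have hv1x : q.1 < v1.1 := hqx v1 hv1L hv1q
    have hv1A := hA v1 hv1L
    have hm : ml' < m := by
      by_contra hcm
      push_neg at hcm
      nlinarith [mul_nonneg (sub_nonneg.mpr hcm) (le_of_lt (sub_pos.mpr hv1x))]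
    have hlUin : m * lU.1 + k ≤ lU.2 := by
      nlinarith [mul_pos (sub_pos.mpr hm) (sub_pos.mpr hlUq)]
    exact absurd (hχU lU hlU.1 hlUp) (hno lU (Or.inl ⟨hlU.1, hlUin⟩))
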